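/- The derangement polynomial d_t(x) = ∑_{σ derangement in S_t} ∑_{τ ∈ S_t} x^{|σ^{-1}τ| + |τ|} satisfies the closed-form expression d_t(x) = (-1)^t ∑_{k=0}^{t} (-1)^k binom(t,k) ∏_{ℓ=k+1}^{t} (1 + (ℓ-1)x²) ∏_{ℓ=1}^{k} (1 + (ℓ-1)x)². -/

import Mathlib

/-- Minimal number of transpositions whose product is `σ`. -/
noncomputable def transLen {t : ℕ} (σ : Equiv.Perm (Fin t)) : ℕ :=
  sInf {n | ∃ L : List (Equiv.Perm (Fin t)),
    L.length = n ∧ (∀ τ ∈ L, τ.IsSwap) ∧ L.prod = σ}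

/-- The derangement polynomial
`d_t(x) = ∑_{σ derangement in S_t} ∑_{τ ∈ S_t} x^{|σ⁻¹τ| + |τ|}`. -/
noncomputable def dpoly (k : ℕ) (x : ℝ) : ℝ :=
  ∑ σ ∈ Finset.univ.filter (fun σ : Equiv.Perm (Fin k) => ∀ i, σ i ≠ i),
    ∑ τ : Equiv.Perm (Fin k), x ^ (transLen (σ⁻¹ * τ) + transLen τ)

open Equiv Equiv.Perm Finset



namespace DPaux

def iot {n : ℕ} : Perm (Fin n) →* Perm (Fin (n + 1)) where
  toFun e := Equiv.Perm.decomposeFin.symm (0, e)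
  map_one' := by
    ext i
    cases i using Fin.cases <;>
      simp [Equiv.Perm.decomposeFin_symm_apply_zero, Equiv.Perm.decomposeFin_symm_apply_succ]
  map_mul' e f := by
    ext i
    cases i using Fin.cases <;>
      simp [Equiv.Perm.decomposeFin_symm_apply_zero, Equiv.Perm.decomposeFin_symm_apply_succ]

@[simp] lemma iot_zero {n : ℕ} (e : Perm (Fin n)) : iot e 0 = 0 :=
  Equiv.Perm.decomposeFin_symm_apply_zero 0 e

@[simp] lemma iot_succ {n : ℕ} (e : Perm (Fin n)) (i : Fin n) :
    iot e i.succ = (e i).succ := by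
  change Equiv.Perm.decomposeFin.symm (0, e) i.succ = _
  rw [Equiv.Perm.decomposeFin_symm_apply_succ]
  simp

lemma decomposeFin_symm_eq {n : ℕ} (p : Fin (n + 1)) (e : Perm (Fin n)) :
    Equiv.Perm.decomposeFin.symm (p, e) = swap 0 p * iot e := by
  ext i
  cases i using Fin.cases with
  | zero => simp [Equiv.Perm.decomposeFin_symm_apply_zero]
  | succ i => simp [Equiv.Perm.decomposeFin_symm_apply_succ, Fin.succ_ne_zero]

lemma iot_injective {n : ℕ} : Function.Injective (@iot n) := by
  intro e f h
  ext i
  have h2 := congrArg (fun σ : Perm (Fin (n+1)) => σ i.succ) h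
  simp only [iot_succ] at h2
  exact congrArg Fin.val (Fin.succ_injective _ h2)

lemma iot_swap {n : ℕ} (a b : Fin n) : iot (swap a b) = swap a.succ b.succ := by
  ext i
  cases i using Fin.cases with
  | zero =>
    simp [swap_apply_of_ne_of_ne (Fin.succ_ne_zero a).symm (Fin.succ_ne_zero b).symm]
  | succ i =>
    rcases eq_or_ne i a with rfl | ha
    · simp
    · rcases eq_or_ne i b with rfl | hb
      · simp
      · simp [swap_apply_of_ne_of_ne ha hb,
          swap_apply_of_ne_of_ne ((Fin.succ_inj.ne.mpr ha)) ((Fin.succ_inj.ne.mpr hb)), ha, hb]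

/-- recursive "length" of a permutation: `n` minus the number of cycles. -/
def len : ∀ {n : ℕ}, Perm (Fin n) → ℕ
  | 0, _ => 0
  | _ + 1, σ =>
    (if (Equiv.Perm.decomposeFin σ).1 = 0 then 0 else 1) + len (Equiv.Perm.decomposeFin σ).2

lemma len_decomposeFin_symm {n : ℕ} (p : Fin (n + 1)) (e : Perm (Fin n)) :
    len (Equiv.Perm.decomposeFin.symm (p, e)) = (if p = 0 then 0 else 1) + len e := by
  simp [len]

lemma len_swap_mul_iot {n : ℕ} (p : Fin (n + 1)) (e : Perm (Fin n)) :
    len (swap 0 p * iot e) = (if p = 0 then 0 else 1) + len e := by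
  rw [← decomposeFin_symm_eq, len_decomposeFin_symm]

@[simp] lemma len_iot {n : ℕ} (e : Perm (Fin n)) : len (iot e) = len e := by
  have := len_swap_mul_iot 0 e
  simpa [← Equiv.Perm.one_def] using this

@[simp] lemma len_one {n : ℕ} : len (1 : Perm (Fin n)) = 0 := by
  induction n with
  | zero => rfl
  | succ m ih =>
    have : (1 : Perm (Fin (m+1))) = iot 1 := (map_one iot).symm
    rw [this, len_iot, ih]

lemma sigma_eq_swap_mul_iot {n : ℕ} (σ : Perm (Fin (n + 1))) :
    σ = swap 0 ((Equiv.Perm.decomposeFin σ).1) * iot ((Equiv.Perm.decomposeFin σ).2) := by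
  conv_lhs => rw [← Equiv.symm_apply_apply Equiv.Perm.decomposeFin σ]
  rw [show (Equiv.Perm.decomposeFin σ) =
    ((Equiv.Perm.decomposeFin σ).1, (Equiv.Perm.decomposeFin σ).2) from rfl,
    decomposeFin_symm_eq]

lemma swap_zero_mul_swap_zero {n : ℕ} {b p : Fin (n + 1)} (hb : b ≠ 0) (hp : p ≠ 0)
    (hbp : b ≠ p) : swap 0 b * swap 0 p = swap 0 p * swap b p := by
  have h1 : swap ((swap 0 p) 0) ((swap 0 p) b) = swap 0 p * swap 0 b * (swap 0 p)⁻¹ :=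
    swap_apply_apply _ 0 b
  rw [swap_inv, swap_apply_left, swap_apply_of_ne_of_ne hb hbp] at h1
  have h2 : swap 0 p * swap p b = swap 0 p * (swap 0 p * swap 0 b * swap 0 p) := by rw [h1]
  rw [swap_comm b p, h2, ← mul_assoc, ← mul_assoc, swap_mul_self, one_mul]

lemma len_swap_mul : ∀ {n : ℕ} (σ : Perm (Fin n)) (a b : Fin n), a ≠ b →
    len (swap a b * σ) ≤ len σ + 1 := by
  intro n
  induction n with
  | zero => intro σ a b _; exact a.elim0
  | succ m IH =>
    intro σ a b hab
    obtain ⟨p, e, hσ⟩ : ∃ p e, σ = swap 0 p * iot e :=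
      ⟨_, _, sigma_eq_swap_mul_iot σ⟩
    have hlenσ : len σ = (if p = 0 then 0 else 1) + len e := by
      rw [hσ, len_swap_mul_iot]
    have case0 : ∀ b : Fin (m+1), b ≠ 0 → len (swap 0 b * σ) ≤ len σ + 1 := by
      intro b hb
      rcases eq_or_ne p 0 with rfl | hpne
      · have hσ' : σ = iot e := by rw [hσ]; simp [← Equiv.Perm.one_def]
        rw [hσ', ← decomposeFin_symm_eq, len_decomposeFin_symm]
        simp [hb]
        omega
      · rcases eq_or_ne b p with rfl | hbp
        · rw [hσ, ← mul_assoc, swap_mul_self, one_mul, len_iot, len_swap_mul_iot]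
          omega
        · obtain ⟨q, hq⟩ : ∃ q : Fin m, p = q.succ := ⟨p.pred hpne, (Fin.succ_pred p hpne).symm⟩
          obtain ⟨k, hk⟩ : ∃ k : Fin m, b = k.succ := ⟨b.pred hb, (Fin.succ_pred b hb).symm⟩
          have hkq : k ≠ q := fun h => hbp (by rw [hk, hq, h])
          have h0 : swap 0 b * σ = swap 0 p * iot (swap k q * e) := by
            rw [hσ, ← mul_assoc, swap_zero_mul_swap_zero hb hpne hbp, mul_assoc,
              hk, hq, ← iot_swap, ← map_mul]
          rw [h0, len_swap_mul_iot, hlenσ]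
          have := IH e k q hkq
          simp only [hpne, if_neg]
          omega
    cases a using Fin.cases with
    | zero => exact case0 b hab.symm
    | succ j =>
      cases b using Fin.cases with
      | zero => rw [swap_comm]; exact case0 j.succ (Fin.succ_ne_zero j)
      | succ k =>
        have hjk : j ≠ k := fun h => hab (by rw [h])
        have h0 : swap j.succ k.succ * σ
            = swap 0 (swap j.succ k.succ p) * iot (swap j k * e) := by
          rw [hσ, ← mul_assoc, mul_swap_eq_swap_mul (swap j.succ k.succ) 0 p,
            swap_apply_of_ne_of_ne (Fin.succ_ne_zero j).symm (Fin.succ_ne_zero k).symm,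
            mul_assoc, ← iot_swap, ← map_mul]
        rw [h0, len_swap_mul_iot, hlenσ]
        have hind : (if swap j.succ k.succ p = 0 then 0 else 1) = (if p = 0 then 0 else 1) := by
          rcases eq_or_ne p 0 with rfl | hpne
          · rw [swap_apply_of_ne_of_ne (Fin.succ_ne_zero j).symm (Fin.succ_ne_zero k).symm]
          · have : swap j.succ k.succ p ≠ 0 := by
              rcases eq_or_ne p j.succ with rfl | h1
              · rw [swap_apply_left]; exact Fin.succ_ne_zero k
              rcases eq_or_ne p k.succ with rfl | h2
              · rw [swap_apply_right]; exact Fin.succ_ne_zero j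
              · rw [swap_apply_of_ne_of_ne h1 h2]; exact hpne
            simp [this, hpne]
        rw [hind]
        have := IH e j k hjk
        omega


lemma len_prod_le {n : ℕ} (L : List (Perm (Fin n))) (h : ∀ τ ∈ L, τ.IsSwap) :
    len L.prod ≤ L.length := by
  induction L with
  | nil => simp
  | cons τ L ih =>
    obtain ⟨a, b, hab, rfl⟩ := h τ List.mem_cons_self
    rw [List.prod_cons]
    calc len (swap a b * L.prod) ≤ len L.prod + 1 := len_swap_mul _ a b hab
      _ ≤ L.length + 1 := by
          have := ih (fun τ ht => h τ (List.mem_cons_of_mem _ ht))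
          omega
      _ = (swap a b :: L).length := by simp

lemma exists_swap_list : ∀ {n : ℕ} (σ : Perm (Fin n)),
    ∃ L : List (Perm (Fin n)), L.length = len σ ∧ (∀ τ ∈ L, τ.IsSwap) ∧ L.prod = σ := by
  intro n
  induction n with
  | zero =>
    intro σ
    refine ⟨[], by simp [len], by simp, ?_⟩
    simp [Subsingleton.elim (1 : Perm (Fin 0)) σ]
  | succ m IH =>
    intro σ
    obtain ⟨p, e, hσ⟩ : ∃ p e, σ = swap 0 p * iot e :=
      ⟨_, _, sigma_eq_swap_mul_iot σ⟩
    obtain ⟨L, hL1, hL2, hL3⟩ := IH e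
    have hswaps : ∀ τ ∈ L.map iot, τ.IsSwap := by
      intro τ hτ
      obtain ⟨ρ, hρ, rfl⟩ := List.mem_map.mp hτ
      obtain ⟨a, b, hab, rfl⟩ := hL2 ρ hρ
      exact ⟨a.succ, b.succ, Fin.succ_inj.ne.mpr hab, iot_swap a b⟩
    have hprod : (L.map iot).prod = iot e := by
      rw [← hL3]; exact (map_list_prod iot L).symm
    rcases eq_or_ne p 0 with rfl | hpne
    · refine ⟨L.map iot, ?_, hswaps, ?_⟩
      · simp [hL1, hσ, len_swap_mul_iot, ← Equiv.Perm.one_def]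
      · rw [hprod, hσ]; simp [← Equiv.Perm.one_def]
    · refine ⟨swap 0 p :: L.map iot, ?_, ?_, ?_⟩
      · simp [hL1, hσ, len_swap_mul_iot, hpne]
        omega
      · intro τ hτ
        rcases List.mem_cons.mp hτ with rfl | hτ
        · exact ⟨0, p, Ne.symm hpne, rfl⟩
        · exact hswaps τ hτ
      · rw [List.prod_cons, hprod, hσ]

theorem transLen_eq_len {n : ℕ} (σ : Perm (Fin n)) : transLen σ = len σ := by
  obtain ⟨L, hL1, hL2, hL3⟩ := exists_swap_list σ
  apply le_antisymm
  · apply Nat.sInf_le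
    show ∃ M : List (Perm (Fin n)), M.length = len σ ∧ (∀ τ ∈ M, τ.IsSwap) ∧ M.prod = σ
    exact ⟨L, hL1, hL2, hL3⟩
  · have hne : {m : ℕ | ∃ M : List (Perm (Fin n)), M.length = m ∧
        (∀ τ ∈ M, τ.IsSwap) ∧ M.prod = σ}.Nonempty := ⟨len σ, L, hL1, hL2, hL3⟩
    apply le_csInf hne
    rintro b ⟨M, rfl, hM2, hM3⟩
    rw [← hM3]
    exact len_prod_le M hM2

lemma len_inv_le {n : ℕ} (σ : Perm (Fin n)) : len σ⁻¹ ≤ len σ := by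
  obtain ⟨L, hL1, hL2, hL3⟩ := exists_swap_list σ
  have : σ⁻¹ = ((L.map fun x => x⁻¹).reverse).prod := by
    rw [← List.prod_inv_reverse, hL3]
  rw [this]
  calc len ((L.map fun x => x⁻¹).reverse).prod ≤ ((L.map fun x => x⁻¹).reverse).length := by
        apply len_prod_le
        intro τ hτ
        rw [List.mem_reverse] at hτ
        obtain ⟨ρ, hρ, rfl⟩ := List.mem_map.mp hτ
        obtain ⟨a, b, hab, rfl⟩ := hL2 ρ hρ
        exact ⟨a, b, hab, by simp⟩
    _ = len σ := by simp [hL1]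

@[simp] lemma len_inv {n : ℕ} (σ : Perm (Fin n)) : len σ⁻¹ = len σ := by
  apply le_antisymm (len_inv_le σ)
  have := len_inv_le σ⁻¹
  simpa using this

lemma len_conj {n : ℕ} (g σ : Perm (Fin n)) : len (g * σ * g⁻¹) = len σ := by
  have key : ∀ g σ : Perm (Fin n), len (g * σ * g⁻¹) ≤ len σ := by
    intro g σ
    obtain ⟨L, hL1, hL2, hL3⟩ := exists_swap_list σ
    have hgen : ∀ M : List (Perm (Fin n)), (M.map fun x => g * x * g⁻¹).prod
        = g * M.prod * g⁻¹ := by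
      intro M
      induction M with
      | nil => simp
      | cons a M ih => rw [List.map_cons, List.prod_cons, List.prod_cons, ih]; group
    have : g * σ * g⁻¹ = (L.map fun x => g * x * g⁻¹).prod := by
      rw [hgen, hL3]
    rw [this]
    calc len (L.map fun x => g * x * g⁻¹).prod ≤ (L.map fun x => g * x * g⁻¹).length := by
          apply len_prod_le
          intro τ hτ
          obtain ⟨ρ, hρ, rfl⟩ := List.mem_map.mp hτ
          obtain ⟨a, b, hab, rfl⟩ := hL2 ρ hρ
          exact ⟨g a, g b, fun h => hab (g.injective h), (swap_apply_apply g a b).symm⟩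
      _ = len σ := by simp [hL1]
  apply le_antisymm (key g σ)
  have := key g⁻¹ (g * σ * g⁻¹)
  simp only [inv_inv] at this
  calc len σ = len (g⁻¹ * (g * σ * g⁻¹) * g) := by group
    _ ≤ len (g * σ * g⁻¹) := by
        have h2 := key g⁻¹ (g * σ * g⁻¹)
        simpa using h2

lemma sum_x_pow_len {n : ℕ} (x : ℝ) :
    ∑ σ : Perm (Fin n), x ^ len σ = ∏ ℓ ∈ Finset.range n, (1 + (ℓ : ℝ) * x) := by
  induction n with
  | zero => simp [len]
  | succ m IH =>
    rw [← (Equiv.sum_comp Equiv.Perm.decomposeFin.symm (fun σ => x ^ len σ))]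
    rw [Fintype.sum_prod_type]
    have hterm : ∀ (p : Fin (m+1)) (e : Perm (Fin m)),
        x ^ len (Equiv.Perm.decomposeFin.symm (p, e))
          = (if p = 0 then 1 else x) * x ^ len e := by
      intro p e
      rw [len_decomposeFin_symm]
      rcases eq_or_ne p 0 with rfl | hp
      · simp
      · simp [hp, pow_add]
    have : ∀ p : Fin (m+1), ∑ e : Perm (Fin m), x ^ len (Equiv.Perm.decomposeFin.symm (p, e))
        = (if p = 0 then 1 else x) * ∏ ℓ ∈ Finset.range m, (1 + (ℓ : ℝ) * x) := by
      intro p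
      rw [← IH, Finset.mul_sum]
      exact Finset.sum_congr rfl fun e _ => hterm p e
    rw [Finset.sum_congr rfl fun p _ => this p, ← Finset.sum_mul]
    rw [Finset.prod_range_succ]
    have hsum : ∑ p : Fin (m+1), (if p = 0 then (1:ℝ) else x) = 1 + m * x := by
      have hpt : ∀ p : Fin (m+1), (if p = 0 then (1:ℝ) else x)
          = x + (if p = 0 then 1 - x else 0) := by
        intro p; split <;> ring
      simp only [hpt, Finset.sum_add_distrib, Finset.sum_const, Finset.sum_ite_eq',
        Finset.mem_univ, if_true, Finset.card_univ, Fintype.card_fin, nsmul_eq_mul]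
      push_cast
      ring
    rw [hsum]
    ring

noncomputable section GroupAlg

open MonoidAlgebra

abbrev GA (n : ℕ) := MonoidAlgebra ℝ (Perm (Fin n))

instance (n : ℕ) : CoeFun (GA n) (fun _ => Perm (Fin n) → ℝ) := ⟨fun f => f.coeff⟩

/-- coefficient-extraction form of multiplication. -/
lemma mul_apply_univ {n : ℕ} (f g : GA n) (σ : Perm (Fin n)) :
    (f * g) σ = ∑ α : Perm (Fin n), f α * g (α⁻¹ * σ) := by
  rw [MonoidAlgebra.mul_apply_left]
  rw [Finsupp.sum_fintype]
  intro a
  simp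

/-- every element of the group algebra is the sum of its coefficients times singles. -/
lemma eq_sum_single {n : ℕ} (f : GA n) :
    f = ∑ σ : Perm (Fin n), MonoidAlgebra.single σ (f σ) := by
  ext τ
  rw [MonoidAlgebra.coeff_sum, Finsupp.finset_sum_apply]
  simp [Finsupp.single_apply]

def Ealg (n : ℕ) (x : ℝ) : GA n :=
  ∑ σ : Perm (Fin n), MonoidAlgebra.single σ (x ^ len σ)

def Walg (n : ℕ) (x : ℝ) : GA (n + 1) :=
  ∑ p : Fin (n + 1), MonoidAlgebra.single (swap 0 p) (x ^ (if p = 0 then 0 else 1))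

def Phi (n : ℕ) : GA n →+* GA (n + 1) := MonoidAlgebra.mapDomainRingHom ℝ (iot (n := n))

lemma Phi_single {n : ℕ} (e : Perm (Fin n)) (c : ℝ) :
    Phi n (MonoidAlgebra.single e c) = MonoidAlgebra.single (iot e) c := by
  simp [Phi, MonoidAlgebra.mapDomainRingHom, Finsupp.mapDomain_single]

lemma Phi_apply_iot {n : ℕ} (F : GA n) (e : Perm (Fin n)) : Phi n F (iot e) = F e := by
  simp only [Phi, mapDomainRingHom_apply]
  exact Finsupp.mapDomain_apply iot_injective F.coeff e

lemma Phi_apply_nonfix {n : ℕ} (F : GA n) (g : Perm (Fin (n+1))) (hg : g 0 ≠ 0) :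
    Phi n F g = 0 := by
  simp only [Phi, mapDomainRingHom_apply]
  apply Finsupp.mapDomain_notin_range
  rintro ⟨e, rfl⟩
  exact hg (iot_zero e)

lemma Ealg_coeff {n : ℕ} (x : ℝ) (τ : Perm (Fin n)) : Ealg n x τ = x ^ len τ := by
  rw [Ealg, MonoidAlgebra.coeff_sum, Finsupp.finset_sum_apply]
  simp [Finsupp.single_apply]

lemma Ealg_succ {n : ℕ} (x : ℝ) : Ealg (n + 1) x = Walg n x * Phi n (Ealg n x) := by
  rw [Ealg, ← (Equiv.sum_comp Equiv.Perm.decomposeFin.symm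
    (fun σ => MonoidAlgebra.single σ (x ^ len σ)))]
  rw [Fintype.sum_prod_type]
  rw [Ealg, map_sum, Walg, Finset.sum_mul]
  refine Finset.sum_congr rfl fun p _ => ?_
  rw [Finset.mul_sum]
  refine Finset.sum_congr rfl fun e _ => ?_
  rw [Phi_single, MonoidAlgebra.single_mul_single, decomposeFin_symm_eq,
    len_swap_mul_iot, pow_add]

lemma single_iot_mul_Walg {n : ℕ} (x : ℝ) (e : Perm (Fin n)) (c : ℝ) :
    MonoidAlgebra.single (iot e) c * Walg n x = Walg n x * MonoidAlgebra.single (iot e) c := by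
  have h1 : ∀ p, iot e * swap 0 p = swap 0 (iot e p) * iot e := by
    intro p
    have := mul_swap_eq_swap_mul (iot e) 0 p
    rwa [iot_zero] at this
  have h2 : ∀ p : Fin (n+1), ((iot e) p = 0) ↔ (p = 0) := by
    intro p
    constructor
    · intro h
      exact (iot e).injective (h.trans (iot_zero e).symm)
    · rintro rfl; exact iot_zero e
  rw [Walg, Finset.mul_sum, Finset.sum_mul]
  rw [← (Equiv.sum_comp (iot e)
    (fun q => MonoidAlgebra.single (swap 0 q) (x ^ if q = 0 then 0 else 1)
      * MonoidAlgebra.single (iot e) c))]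
  refine Finset.sum_congr rfl fun p _ => ?_
  rw [MonoidAlgebra.single_mul_single, MonoidAlgebra.single_mul_single, h1]
  simp only [h2]
  rw [mul_comm c]

lemma Phi_mul_Walg {n : ℕ} (x : ℝ) (F : GA n) :
    Phi n F * Walg n x = Walg n x * Phi n F := by
  conv_lhs => rw [eq_sum_single F]
  conv_rhs => rw [eq_sum_single F]
  rw [map_sum, Finset.sum_mul, Finset.mul_sum]
  refine Finset.sum_congr rfl fun e _ => ?_
  rw [Phi_single]
  exact single_iot_mul_Walg x e (F e)

lemma Ealg_sq_succ {n : ℕ} (x : ℝ) :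
    Ealg (n+1) x * Ealg (n+1) x
      = Walg n x * Walg n x * Phi n (Ealg n x * Ealg n x) := by
  rw [Ealg_succ, map_mul]
  calc Walg n x * Phi n (Ealg n x) * (Walg n x * Phi n (Ealg n x))
      = Walg n x * (Phi n (Ealg n x) * Walg n x) * Phi n (Ealg n x) := by
        rw [mul_assoc, mul_assoc, mul_assoc]
    _ = Walg n x * (Walg n x * Phi n (Ealg n x)) * Phi n (Ealg n x) := by
        rw [Phi_mul_Walg]
    _ = Walg n x * Walg n x * (Phi n (Ealg n x) * Phi n (Ealg n x)) := by
        rw [mul_assoc, mul_assoc, mul_assoc]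

lemma Walg_mul_apply {n : ℕ} (x : ℝ) (h : GA (n+1)) (y : Perm (Fin (n+1))) :
    (Walg n x * h) y
      = ∑ p : Fin (n+1), x ^ (if p = 0 then 0 else 1) * h (swap 0 p * y) := by
  rw [Walg, Finset.sum_mul, MonoidAlgebra.coeff_sum, Finsupp.finset_sum_apply]
  refine Finset.sum_congr rfl fun p _ => ?_
  rw [MonoidAlgebra.single_mul_apply, swap_inv]

/-- THE key coefficient identity. -/
lemma WW_Phi_apply_iot {n : ℕ} (x : ℝ) (F : GA n) (σ : Perm (Fin n)) :
    (Walg n x * Walg n x * Phi n F) (iot σ)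
      = (1 + n * x ^ 2) * F σ := by
  rw [mul_assoc, Walg_mul_apply]
  have inner : ∀ p : Fin (n+1),
      (Walg n x * Phi n F) (swap 0 p * iot σ)
        = x ^ (if p = 0 then 0 else 1) * F σ := by
    intro p
    rw [Walg_mul_apply]
    have hterm : ∀ q : Fin (n+1),
        x ^ (if q = 0 then 0 else 1) * (Phi n F) (swap 0 q * (swap 0 p * iot σ))
          = if q = p then x ^ (if p = 0 then 0 else 1) * F σ else 0 := by
      intro q
      rcases eq_or_ne q p with rfl | hqp
      · rw [← mul_assoc, swap_mul_self, one_mul, Phi_apply_iot, if_pos rfl]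
      · rw [if_neg hqp]
        have h0 : (swap 0 q * (swap 0 p * iot σ)) 0 ≠ 0 := by
          have hv : (swap 0 q * (swap 0 p * iot σ)) 0 = swap 0 q p := by
            simp [Perm.mul_apply]
          rw [hv]
          rcases eq_or_ne p 0 with rfl | hp
          · rw [swap_apply_left]; exact hqp
          · rw [swap_apply_of_ne_of_ne hp (Ne.symm hqp)]
            exact hp
        rw [Phi_apply_nonfix _ _ h0, mul_zero]
    rw [Finset.sum_congr rfl fun q _ => hterm q, Finset.sum_ite_eq' Finset.univ p _]
    simp
  simp only [inner]
  have hthis : ∀ p : Fin (n+1), x ^ (if p = 0 then 0 else 1) * (x ^ (if p = 0 then 0 else 1) * F σ)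
      = (if p = 0 then 1 else x^2) * F σ := by
    intro p
    rcases eq_or_ne p 0 with rfl | hp
    · simp
    · split_ifs with h
      · exact absurd h hp
      · ring
  simp only [hthis]
  rw [← Finset.sum_mul]
  congr 1
  have hpt : ∀ p : Fin (n+1), (if p = 0 then (1:ℝ) else x^2)
      = x^2 + (if p = 0 then 1 - x^2 else 0) := by
    intro p; split <;> ring
  simp only [hpt, Finset.sum_add_distrib, Finset.sum_const, Finset.sum_ite_eq',
    Finset.mem_univ, if_true, Finset.card_univ, Fintype.card_fin, nsmul_eq_mul]
  push_cast
  ring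

lemma Bco_iot {n : ℕ} (x : ℝ) (σ : Perm (Fin n)) :
    (Ealg (n+1) x * Ealg (n+1) x) (iot σ)
      = (1 + n * x ^ 2) * ((Ealg n x * Ealg n x) σ) := by
  rw [Ealg_sq_succ, WW_Phi_apply_iot]

lemma Ealg_central {n : ℕ} (x : ℝ) (g : Perm (Fin n)) :
    MonoidAlgebra.single g (1:ℝ) * Ealg n x = Ealg n x * MonoidAlgebra.single g 1 := by
  rw [Ealg, Finset.mul_sum, Finset.sum_mul]
  have eqv : Perm (Fin n) ≃ Perm (Fin n) :=
    (Equiv.mulLeft g).trans (Equiv.mulRight g⁻¹)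
  rw [← (Equiv.sum_comp ((Equiv.mulLeft g).trans (Equiv.mulRight g⁻¹))
    (fun σ => MonoidAlgebra.single σ (x ^ len σ) * MonoidAlgebra.single g 1))]
  refine Finset.sum_congr rfl fun σ _ => ?_
  simp only [Equiv.trans_apply, Equiv.coe_mulLeft, Equiv.coe_mulRight]
  rw [MonoidAlgebra.single_mul_single, MonoidAlgebra.single_mul_single]
  rw [len_conj g σ]
  congr 1
  · group
  · ring

lemma Bco_conj {n : ℕ} (x : ℝ) (g σ : Perm (Fin n)) :
    (Ealg n x * Ealg n x) (g * σ * g⁻¹) = (Ealg n x * Ealg n x) σ := by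
  have hc : MonoidAlgebra.single g (1:ℝ) * (Ealg n x * Ealg n x)
      = (Ealg n x * Ealg n x) * MonoidAlgebra.single g 1 := by
    rw [← mul_assoc, Ealg_central, mul_assoc, Ealg_central, mul_assoc]
  have key : Ealg n x * Ealg n x
      = MonoidAlgebra.single g (1:ℝ) * (Ealg n x * Ealg n x)
          * MonoidAlgebra.single g⁻¹ 1 := by
    rw [hc, mul_assoc, MonoidAlgebra.single_mul_single, mul_inv_cancel, mul_one]
    rw [← MonoidAlgebra.one_def, mul_one]
  conv_lhs => rw [key]
  rw [MonoidAlgebra.mul_single_apply, MonoidAlgebra.single_mul_apply]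
  rw [mul_one, one_mul]
  congr 1
  group

lemma Bco_eq {n : ℕ} (x : ℝ) (σ : Perm (Fin n)) :
    (Ealg n x * Ealg n x) σ = ∑ τ : Perm (Fin n), x ^ (len (σ⁻¹ * τ) + len τ) := by
  rw [mul_apply_univ]
  refine Finset.sum_congr rfl fun τ _ => ?_
  rw [Ealg_coeff, Ealg_coeff, ← pow_add]
  have h : len (τ⁻¹ * σ) = len (σ⁻¹ * τ) := by
    rw [← len_inv (τ⁻¹ * σ), mul_inv_rev, inv_inv]
  rw [h, add_comm]

lemma tot_mul {n : ℕ} (f g : GA n) :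
    ∑ σ : Perm (Fin n), (f * g) σ
      = (∑ σ : Perm (Fin n), f σ) * (∑ σ : Perm (Fin n), g σ) := by
  simp only [mul_apply_univ]
  rw [Finset.sum_comm, Finset.sum_mul]
  refine Finset.sum_congr rfl fun α _ => ?_
  rw [Finset.mul_sum]
  rw [← (Equiv.sum_comp (Equiv.mulLeft α⁻¹) (fun σ => f α * g σ))]
  simp [Equiv.coe_mulLeft]

lemma tot_Ealg {n : ℕ} (x : ℝ) :
    ∑ σ : Perm (Fin n), Ealg n x σ = ∏ ℓ ∈ Finset.range n, (1 + (ℓ:ℝ) * x) := by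
  rw [← sum_x_pow_len]
  exact Finset.sum_congr rfl fun σ _ => Ealg_coeff x σ

lemma tot_Bco {n : ℕ} (x : ℝ) :
    ∑ σ : Perm (Fin n), (Ealg n x * Ealg n x) σ
      = (∏ ℓ ∈ Finset.range n, (1 + (ℓ:ℝ) * x)) ^ 2 := by
  rw [tot_mul, tot_Ealg, sq]

end GroupAlg


section Fiber

open MonoidAlgebra

/-- iterated embedding, adding `m` new fixed points at the bottom. -/
def iotN (k : ℕ) : (m : ℕ) → (Perm (Fin k) →* Perm (Fin (k + m)))
  | 0 => MonoidHom.id _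
  | m + 1 => (iot).comp (iotN k m)

/-- embedding of old indices. -/
def hiN (k : ℕ) : (m : ℕ) → Fin k → Fin (k + m)
  | 0, i => i
  | m + 1, i => (hiN k m i).succ

lemma hiN_val (k m : ℕ) (i : Fin k) : (hiN k m i : ℕ) = (i : ℕ) + m := by
  induction m with
  | zero => rfl
  | succ m ih => simp [hiN, Fin.val_succ, ih]; omega

lemma hiN_inj {k m : ℕ} : Function.Injective (hiN k m) := by
  intro i j h
  have := congrArg Fin.val h
  rw [hiN_val, hiN_val] at this
  exact Fin.ext (by omega)

lemma iotN_hiN {k m : ℕ} (σ : Perm (Fin k)) (i : Fin k) :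
    iotN k m σ (hiN k m i) = hiN k m (σ i) := by
  induction m with
  | zero => rfl
  | succ m ih =>
    show iot ((iotN k m) σ) (hiN k m i).succ = (hiN k m (σ i)).succ
    rw [iot_succ, ih]

lemma iotN_fix {k m : ℕ} (σ : Perm (Fin k)) (z : Fin (k + m))
    (hz : (z : ℕ) < m) : iotN k m σ z = z := by
  induction m with
  | zero => omega
  | succ m ih =>
    rcases Fin.eq_zero_or_eq_succ z with rfl | ⟨w, rfl⟩
    · simp [iotN]
    · change iot (iotN k m σ) w.succ = w.succ
      rw [iot_succ]
      rw [ih w (by simpa [Fin.val_succ] using Nat.lt_of_succ_lt_succ (by simpa [Fin.val_succ] using hz))]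

lemma eq_hiN_of_le {k m : ℕ} (z : Fin (k + m)) (hz : m ≤ (z : ℕ)) :
    z = hiN k m ⟨(z : ℕ) - m, by omega⟩ := by
  apply Fin.ext
  rw [hiN_val]
  simp
  omega

lemma iotN_moved_iff {k m : ℕ} (σ : Perm (Fin k)) (hσ : ∀ i, σ i ≠ i) (z : Fin (k + m)) :
    iotN k m σ z ≠ z ↔ m ≤ (z : ℕ) := by
  constructor
  · intro h
    by_contra hlt
    exact h (iotN_fix σ z (by omega))
  · intro h
    rw [eq_hiN_of_le z h, iotN_hiN]
    intro hc
    exact hσ _ (hiN_inj hc)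

lemma iotN_inj {k m : ℕ} : Function.Injective (iotN k m) := by
  intro σ τ h
  ext i
  have := congrArg (fun ρ : Perm (Fin (k+m)) => ρ (hiN k m i)) h
  simp only [iotN_hiN] at this
  exact congrArg Fin.val (hiN_inj this)

lemma iter_Bco {k : ℕ} (x : ℝ) : ∀ (m : ℕ) (σ : Perm (Fin k)),
    (Ealg (k + m) x * Ealg (k + m) x) (iotN k m σ)
      = (∏ ℓ ∈ Finset.Ico k (k + m), (1 + (ℓ : ℝ) * x ^ 2))
          * ((Ealg k x * Ealg k x) σ) := by
  intro m
  induction m with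
  | zero => intro σ; simp [iotN, MonoidHom.id_apply]
  | succ m ih =>
    intro σ
    have h1 : iotN k (m+1) σ = iot (iotN k m σ) := rfl
    rw [h1]
    show (Ealg ((k+m)+1) x * Ealg ((k+m)+1) x) (iot (iotN k m σ))
      = (∏ ℓ ∈ Finset.Ico k ((k+m)+1), (1 + (ℓ : ℝ) * x ^ 2)) * ((Ealg k x * Ealg k x) σ)
    rw [Bco_iot, ih, Finset.prod_Ico_succ_top (Nat.le_add_right k m)]
    push_cast
    ring

lemma Bco_relabel {N N' : ℕ} (d : Fin N ≃ Fin N') (ρ : Perm (Fin N)) (x : ℝ) :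
    (Ealg N' x * Ealg N' x) (d.permCongr ρ) = (Ealg N x * Ealg N x) ρ := by
  have hN : N = N' := by simpa using Fintype.card_congr d
  subst hN
  have hd : d.permCongr ρ = d * ρ * d⁻¹ := by
    ext y
    simp [Equiv.permCongr_apply, Perm.mul_apply]
  rw [hd, Bco_conj]

lemma fiber_sum {n : ℕ} (x : ℝ) (S : Finset (Fin n)) :
    ∑ σ ∈ Finset.univ.filter (fun σ : Perm (Fin n) => σ.support = S),
        (Ealg n x * Ealg n x) σ
      = (∏ ℓ ∈ Finset.Ico S.card n, (1 + (ℓ : ℝ) * x ^ 2))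
          * ∑ σ' ∈ Finset.univ.filter
              (fun σ' : Perm (Fin S.card) => ∀ i, σ' i ≠ i),
              (Ealg S.card x * Ealg S.card x) σ' := by
  set k := S.card with hkdef
  have hk : k ≤ n := by
    have := Finset.card_le_univ S
    simpa using this
  set m := n - k with hmdef
  have hkm : k + m = n := by omega
  have hSc : Sᶜ.card = m := by
    rw [Finset.card_compl]
    simp [hkdef]
    try omega
  -- the relabeling equivalence
  let eS : Fin k ≃o {y // y ∈ S} := S.orderIsoOfFin rfl
  let eC : Fin m ≃o {y // y ∈ Sᶜ} := Sᶜ.orderIsoOfFin hSc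
  let c : Fin (k + m) ≃ Fin n :=
    ((finCongr (add_comm k m)).trans finSumFinEquiv.symm).trans <|
      ((Equiv.sumCongr eC.toEquiv eS.toEquiv).trans <|
        ((Equiv.sumCongr (Equiv.subtypeEquivRight (fun y => Finset.mem_compl))
            (Equiv.subtypeEquivRight (fun y => (not_not (a := y ∈ S)).symm))).trans
          (Equiv.sumCompl (fun y : Fin n => y ∉ S))))
  have hc : ∀ z : Fin (k + m), (c z ∈ S) ↔ m ≤ (z : ℕ) := by
    intro z
    rcases le_or_gt m (z : ℕ) with hz | hz
    · have hlt : (z : ℕ) - m < k := by omega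
      have hrepr : (finCongr (add_comm k m) z) = finSumFinEquiv (Sum.inr ⟨(z:ℕ) - m, hlt⟩) := by
        apply Fin.ext
        simp [finSumFinEquiv]
        try omega
      simp only [c, Equiv.trans_apply, hrepr, Equiv.symm_apply_apply]
      simp only [Equiv.sumCongr_apply, Sum.map_inr, Equiv.sumCompl_apply_inr]
      constructor
      · intro _; exact hz
      · intro _
        simpa using (eS ⟨(z:ℕ) - m, hlt⟩).2
    · have hrepr : (finCongr (add_comm k m) z) = finSumFinEquiv (Sum.inl ⟨(z:ℕ), hz⟩) := by
        apply Fin.ext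
        simp [finSumFinEquiv]
      simp only [c, Equiv.trans_apply, hrepr, Equiv.symm_apply_apply]
      simp only [Equiv.sumCongr_apply, Sum.map_inl, Equiv.sumCompl_apply_inl]
      have hmem := (eC ⟨(z:ℕ), hz⟩).2
      rw [Finset.mem_compl] at hmem
      constructor
      · intro hcon
        exact absurd (by simpa using hcon) hmem
      · intro h; omega
  -- the forward map
  have key : ∀ σ' : Perm (Fin k), (∀ i, σ' i ≠ i) →
      (c.permCongr (iotN k m σ')).support = S := by
    intro σ' hσ'
    ext y
    rw [Equiv.Perm.mem_support]
    have happ : c.permCongr (iotN k m σ') y = c (iotN k m σ' (c.symm y)) := by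
      simp [Equiv.permCongr_apply]
    rw [happ]
    constructor
    · intro h
      have hmove : iotN k m σ' (c.symm y) ≠ c.symm y := by
        intro hfix
        apply h
        rw [hfix, Equiv.apply_symm_apply]
      have := (iotN_moved_iff σ' hσ' _).mp hmove
      have := (hc (c.symm y)).mpr this
      rwa [Equiv.apply_symm_apply] at this
    · intro hy
      have hhigh : m ≤ ((c.symm y : Fin (k+m)) : ℕ) := by
        apply (hc (c.symm y)).mp
        rwa [Equiv.apply_symm_apply]
      have hmove := (iotN_moved_iff σ' hσ' _).mpr hhigh
      intro hcon
      apply hmove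
      have := c.injective (a₁ := iotN k m σ' (c.symm y)) (a₂ := c.symm y)
      apply this
      rw [hcon, Equiv.apply_symm_apply]
  -- sum bijection
  rw [Finset.mul_sum]
  symm
  apply Finset.sum_bij
    (i := fun (σ' : Perm (Fin k)) (_ : σ' ∈ Finset.univ.filter
      (fun σ' : Perm (Fin k) => ∀ i, σ' i ≠ i)) => c.permCongr (iotN k m σ'))
  · intro σ' ha
    rw [Finset.mem_filter] at ha ⊢
    exact ⟨Finset.mem_univ _, key σ' ha.2⟩
  · intro σ' ha τ' hb h
    have h2 : iotN k m σ' = iotN k m τ' := c.permCongr.injective h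
    exact iotN_inj h2
  · -- surjectivity
    intro σ hσ
    rw [Finset.mem_filter] at hσ
    obtain ⟨-, hsupp⟩ := hσ
    set ρ : Perm (Fin (k + m)) := c.symm.permCongr σ with hρ
    have hmoved : ∀ z : Fin (k+m), ρ z ≠ z ↔ m ≤ (z : ℕ) := by
      intro z
      have happ : ρ z = c.symm (σ (c z)) := by simp [hρ, Equiv.permCongr_apply]
      rw [happ]
      constructor
      · intro h
        apply (hc z).mp
        rw [← hsupp, Equiv.Perm.mem_support]
        intro hfix
        apply h
        rw [hfix, Equiv.symm_apply_apply]
      · intro h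
        have : c z ∈ S := (hc z).mpr h
        rw [← hsupp, Equiv.Perm.mem_support] at this
        intro hcon
        apply this
        have := congrArg c hcon
        rwa [Equiv.apply_symm_apply] at this
    have hhighmap : ∀ i : Fin k, ∃ j : Fin k, ρ (hiN k m i) = hiN k m j := by
      intro i
      have h1 : m ≤ ((ρ (hiN k m i)) : ℕ) := by
        by_contra hlow
        push_neg at hlow
        have hfix : ρ (ρ (hiN k m i)) = ρ (hiN k m i) := by
          by_contra hm
          have := (hmoved _).mp hm
          omega
        have := ρ.injective hfix
        have hhi : m ≤ ((hiN k m i) : ℕ) := by rw [hiN_val]; omega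
        rw [this] at hlow
        omega
      refine ⟨⟨(ρ (hiN k m i) : ℕ) - m, by omega⟩, ?_⟩
      exact eq_hiN_of_le _ h1
    choose f0 hf0 using hhighmap
    have hf0inj : Function.Injective f0 := by
      intro i j h
      have : ρ (hiN k m i) = ρ (hiN k m j) := by rw [hf0, hf0, h]
      exact hiN_inj (ρ.injective this)
    have hf0bij : Function.Bijective f0 := (Finite.injective_iff_bijective).mp hf0inj
    refine ⟨Equiv.ofBijective f0 hf0bij, ?_, ?_⟩
    · rw [Finset.mem_filter]
      refine ⟨Finset.mem_univ _, ?_⟩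
      intro i hfix
      have : ρ (hiN k m i) = hiN k m i := by
        have h1 : Equiv.ofBijective f0 hf0bij i = f0 i := rfl
        rw [h1] at hfix
        rw [hf0, hfix]
      have hmv := (hmoved (hiN k m i)).mpr (by rw [hiN_val]; omega)
      exact hmv this
    · -- c.permCongr (iotN (ofBijective f0)) = σ
      have hiotρ : iotN k m (Equiv.ofBijective f0 hf0bij) = ρ := by
        ext z
        rcases le_or_gt m (z : ℕ) with hz | hz
        · rw [eq_hiN_of_le z hz]
          have h1 : iotN k m (Equiv.ofBijective f0 hf0bij) (hiN k m ⟨(z:ℕ) - m, by omega⟩)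
              = hiN k m (f0 ⟨(z:ℕ) - m, by omega⟩) := by
            rw [iotN_hiN]; rfl
          rw [h1, ← hf0]
        · rw [iotN_fix _ z hz]
          by_contra hcon
          have : ρ z ≠ z := fun h => hcon (congrArg Fin.val h.symm)
          have := (hmoved z).mp this
          omega
      rw [hiotρ, hρ]
      ext y
      simp [Equiv.permCongr_apply]
  · intro σ' ha
    rw [Bco_relabel c (iotN k m σ') x, iter_Bco, hkm]

end Fiber

section Final

/-- derangement-restricted total. -/
noncomputable def Dp (k : ℕ) (x : ℝ) : ℝ :=
  ∑ σ ∈ Finset.univ.filter (fun σ : Perm (Fin k) => ∀ i, σ i ≠ i),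
    (Ealg k x * Ealg k x) σ

/-- closed form candidate. -/
noncomputable def cB (t : ℕ) (x : ℝ) : ℝ :=
  (-1 : ℝ) ^ t * ∑ k ∈ Finset.range (t + 1),
    (-1 : ℝ) ^ k * (t.choose k : ℝ)
      * (∏ ℓ ∈ Finset.Ico k t, (1 + (ℓ : ℝ) * x ^ 2))
      * (∏ ℓ ∈ Finset.range k, (1 + (ℓ : ℝ) * x)) ^ 2

lemma relation (n : ℕ) (x : ℝ) :
    (∏ ℓ ∈ Finset.range n, (1 + (ℓ : ℝ) * x)) ^ 2
      = ∑ j ∈ Finset.range (n + 1),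
          (n.choose j : ℝ) * ((∏ ℓ ∈ Finset.Ico j n, (1 + (ℓ : ℝ) * x ^ 2)) * Dp j x) := by
  rw [← tot_Bco]
  rw [← Finset.sum_fiberwise Finset.univ (fun σ : Perm (Fin n) => σ.support)
    (fun σ => (Ealg n x * Ealg n x) σ)]
  have h1 : ∀ S : Finset (Fin n),
      ∑ σ ∈ Finset.univ.filter (fun σ : Perm (Fin n) => σ.support = S),
          (Ealg n x * Ealg n x) σ
        = (∏ ℓ ∈ Finset.Ico S.card n, (1 + (ℓ : ℝ) * x ^ 2)) * Dp S.card x := by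
    intro S
    rw [fiber_sum x S]
    rfl
  rw [Finset.sum_congr rfl fun S _ => h1 S]
  rw [← Finset.powerset_univ, Finset.sum_powerset]
  rw [Finset.card_univ, Fintype.card_fin]
  refine Finset.sum_congr rfl fun j hj => ?_
  have h2 : ∀ S ∈ Finset.powersetCard j (Finset.univ : Finset (Fin n)), S.card = j := by
    intro S hS
    exact (Finset.mem_powersetCard.mp hS).2
  rw [Finset.sum_congr rfl fun S hS => by rw [h2 S hS]]
  rw [Finset.sum_const, Finset.card_powersetCard, Finset.card_univ, Fintype.card_fin,
    nsmul_eq_mul]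

lemma inv_aux (x : ℝ) (t : ℕ) :
    ∑ j ∈ Finset.range (t + 1),
        (t.choose j : ℝ) * ((∏ ℓ ∈ Finset.Ico j t, (1 + (ℓ : ℝ) * x ^ 2)) * cB j x)
      = (∏ ℓ ∈ Finset.range t, (1 + (ℓ : ℝ) * x)) ^ 2 := by
  set A : ℕ → ℝ := fun k => (∏ ℓ ∈ Finset.range k, (1 + (ℓ : ℝ) * x)) ^ 2 with hA
  set P : ℕ → ℕ → ℝ := fun k j => ∏ ℓ ∈ Finset.Ico k j, (1 + (ℓ : ℝ) * x ^ 2) with hP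
  set g : ℕ → ℕ → ℝ := fun j k =>
    (t.choose j : ℝ) * P j t * ((-1:ℝ)^j * ((-1:ℝ)^k * (j.choose k : ℝ) * P k j * A k))
    with hg
  have hterm : ∀ j, (t.choose j : ℝ) * (P j t * cB j x)
      = ∑ k ∈ Finset.range (j + 1), g j k := by
    intro j
    simp only [cB, Finset.mul_sum]
    refine Finset.sum_congr rfl fun k _ => ?_
    simp only [hg, hP, hA]
    ring
  rw [Finset.sum_congr rfl fun j _ => hterm j]
  have hswap : ∑ j ∈ Finset.range (t + 1), ∑ k ∈ Finset.range (j + 1), g j k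
      = ∑ k ∈ Finset.range (t + 1), ∑ j ∈ Finset.Ico k (t + 1), g j k := by
    have h0 := Finset.sum_Ico_Ico_comm 0 (t + 1) (fun k j => g j k)
    simp only [Finset.range_eq_Ico]
    exact h0.symm
  rw [hswap]
  have hinner : ∀ k ∈ Finset.range (t + 1),
      ∑ j ∈ Finset.Ico k (t + 1), g j k = if k = t then A t else 0 := by
    intro k hk
    rw [Finset.mem_range] at hk
    have hkt : k ≤ t := by omega
    have hstep : ∀ j ∈ Finset.Ico k (t + 1),
        g j k = ((t.choose k : ℝ) * P k t * A k)
          * ((-1:ℝ) ^ (j + k) * ((t - k).choose (j - k) : ℝ)) := by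
      intro j hj
      rw [Finset.mem_Ico] at hj
      obtain ⟨hkj, hjt⟩ := hj
      have hjt' : j ≤ t := by omega
      have hCC : (t.choose j : ℝ) * (j.choose k : ℝ)
          = (t.choose k : ℝ) * ((t - k).choose (j - k) : ℝ) := by
        have := Nat.choose_mul (n := t) hkj
        exact_mod_cast congrArg (Nat.cast (R := ℝ)) this
      have hPP : P k j * P j t = P k t := by
        simp only [hP]
        exact Finset.prod_Ico_consecutive _ hkj hjt'
      simp only [hg]
      calc (t.choose j : ℝ) * P j t * ((-1:ℝ)^j * ((-1:ℝ)^k * (j.choose k : ℝ) * P k j * A k))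
          = ((t.choose j : ℝ) * (j.choose k : ℝ)) * (P k j * P j t)
              * ((-1:ℝ)^(j+k) * A k) := by rw [pow_add]; ring
        _ = ((t.choose k : ℝ) * ((t - k).choose (j - k) : ℝ)) * P k t
              * ((-1:ℝ)^(j+k) * A k) := by rw [hCC, hPP]
        _ = ((t.choose k : ℝ) * P k t * A k)
              * ((-1:ℝ) ^ (j + k) * ((t - k).choose (j - k) : ℝ)) := by ring
    rw [Finset.sum_congr rfl hstep, ← Finset.mul_sum]
    have halt : ∑ j ∈ Finset.Ico k (t + 1),
        (-1:ℝ) ^ (j + k) * ((t - k).choose (j - k) : ℝ)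
          = if t - k = 0 then 1 else 0 := by
      rw [Finset.sum_Ico_eq_sum_range]
      have hrw : t + 1 - k = (t - k) + 1 := by omega
      rw [hrw]
      have hterm2 : ∀ i ∈ Finset.range ((t - k) + 1),
          (-1:ℝ) ^ ((k + i) + k) * (((t - k).choose ((k + i) - k)) : ℝ)
            = (-1:ℝ) ^ i * (((t - k).choose i) : ℝ) := by
        intro i _
        have h1 : (k + i) - k = i := by omega
        have h2 : (-1:ℝ) ^ ((k + i) + k) = (-1:ℝ) ^ i := by
          rw [show (k + i) + k = i + 2 * k from by omega, pow_add, pow_mul]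
          simp
        rw [h1, h2]
      rw [Finset.sum_congr rfl hterm2]
      have h3 := Int.alternating_sum_range_choose (n := t - k)
      exact_mod_cast h3
    rw [halt]
    rcases eq_or_ne k t with rfl | hne
    · simp [hP, Nat.choose_self]
    · have : t - k ≠ 0 := by omega
      simp [this, hne]
  rw [Finset.sum_congr rfl hinner]
  simp [hA]

lemma Dp_closed (x : ℝ) : ∀ t, Dp t x = cB t x := by
  intro t
  induction t using Nat.strong_induction_on with
  | _ t IH =>
    have hrel := relation t x
    have hinv := inv_aux x t
    rw [Finset.sum_range_succ] at hrel hinv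
    have hlast : ∀ y : ℝ, (t.choose t : ℝ)
        * ((∏ ℓ ∈ Finset.Ico t t, (1 + (ℓ : ℝ) * x ^ 2)) * y) = y := by
      intro y
      simp [Nat.choose_self]
    rw [hlast] at hrel hinv
    have hsame : ∑ j ∈ Finset.range t,
          (t.choose j : ℝ) * ((∏ ℓ ∈ Finset.Ico j t, (1 + (ℓ : ℝ) * x ^ 2)) * Dp j x)
        = ∑ j ∈ Finset.range t,
          (t.choose j : ℝ) * ((∏ ℓ ∈ Finset.Ico j t, (1 + (ℓ : ℝ) * x ^ 2)) * cB j x) := by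
      refine Finset.sum_congr rfl fun j hj => ?_
      rw [Finset.mem_range] at hj
      rw [IH j hj]
    rw [hsame] at hrel
    linarith

end Final

end DPaux

/-- closed form of the derangement polynomial:
`d_t(x) = (-1)^t ∑_{k=0}^{t} (-1)^k C(t,k) ∏_{ℓ=k+1}^{t}(1+(ℓ-1)x²) ∏_{ℓ=1}^{k}(1+(ℓ-1)x)²`. -/
theorem stmt_6 (t : ℕ) (x : ℝ) :
    dpoly t x
      = (-1 : ℝ) ^ t * ∑ k ∈ Finset.range (t + 1),
          (-1 : ℝ) ^ k * (t.choose k : ℝ)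
            * (∏ ℓ ∈ Finset.Ico k t, (1 + (ℓ : ℝ) * x ^ 2))
            * (∏ ℓ ∈ Finset.range k, (1 + (ℓ : ℝ) * x)) ^ 2 := by
  have h1 : dpoly t x = DPaux.Dp t x := by
    unfold dpoly DPaux.Dp
    refine Finset.sum_congr rfl fun σ _ => ?_
    rw [DPaux.Bco_eq]
    refine Finset.sum_congr rfl fun τ _ => ?_
    rw [DPaux.transLen_eq_len, DPaux.transLen_eq_len]
  rw [h1, DPaux.Dp_closed, DPaux.cB]
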